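/- Let G be a finite group with N = |G|, μ : G → G → ℂ a factor system (|μ(f,g)| = 1 for all f,g; μ(e,f) = μ(f,e) = 1; and μ(h,f)μ(hf,g) = μ(h,fg)μ(f,g) for all f,g,h), and let (D λ)_{λ∈ι} be a family of pairwise-inequivalent irreducible projective unitary representations of G with factor system μ, D λ : G → Matrix (Fin (d λ)) (Fin (d λ)) ℂ, satisfying Σ_{λ∈ι} (d λ)² = N. Let B be a nonempty finite index type, and for each λ let Q λ be a unitary matrix indexed by Fin (d λ) × B. Define W : G → Matrix B B ℂ entrywise by (W f)(p,q) = Σ_{λ∈ι} (d λ / N) · Σ_{j,k ∈ Fin (d λ)} conj((D λ f)(j,k)) · (Q λ)((j,p),(k,q)). Then for every g ∈ G, Σ_{f∈G} conj(μ(f,g)) • ((W f)† · W(fg)) = (if g = e then I else 0). -/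

import Mathlib

open Matrix

private lemma muStar {x : ℂ} (h : ‖x‖ = 1) : x * star x = 1 := by
  rw [Complex.star_def, Complex.mul_conj, ← Complex.sq_norm, h]; norm_num

private lemma avg_intertwine {G : Type*} [Group G] [Fintype G]
    {n m : Type*} [Fintype n] [Fintype m] [DecidableEq n] [DecidableEq m]
    (μ : G → G → ℂ) (hμabs : ∀ f g : G, ‖μ f g‖ = 1)
    (D : G → Matrix n n ℂ) (D' : G → Matrix m m ℂ)
    (hDu : ∀ f, D f ∈ Matrix.unitaryGroup n ℂ)
    (hDm : ∀ f g, D f * D g = μ f g • D (f * g))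
    (hDm' : ∀ f g, D' f * D' g = μ f g • D' (f * g))
    (E : Matrix n m ℂ) (g : G) :
    D g * (∑ f : G, (D f)ᴴ * E * D' f) = (∑ f : G, (D f)ᴴ * E * D' f) * D' g := by
  have key : ∀ f : G, D g * (D (f * g))ᴴ = μ f g • (D f)ᴴ := by
    intro f
    have h1 := congrArg conjTranspose (hDm f g)
    rw [conjTranspose_mul, conjTranspose_smul] at h1
    have h2 : (D (f * g))ᴴ = μ f g • ((D g)ᴴ * (D f)ᴴ) := by
      rw [h1, smul_smul, muStar (hμabs f g), one_smul]
    rw [h2, mul_smul_comm, ← mul_assoc]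
    have hu : D g * (D g)ᴴ = 1 := by
      have := (Matrix.mem_unitaryGroup_iff).mp (hDu g)
      rwa [Matrix.star_eq_conjTranspose] at this
    rw [hu, one_mul]
  calc D g * (∑ f : G, (D f)ᴴ * E * D' f)
      = ∑ f : G, D g * ((D f)ᴴ * E * D' f) := by rw [Matrix.mul_sum]
    _ = ∑ f : G, D g * ((D (f * g))ᴴ * E * D' (f * g)) := by
        exact (Fintype.sum_equiv (Equiv.mulRight g)
          (fun f => D g * ((D (f * g))ᴴ * E * D' (f * g)))
          (fun f => D g * ((D f)ᴴ * E * D' f)) (fun f => rfl)).symm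
    _ = ∑ f : G, ((D f)ᴴ * E * D' f) * D' g := by
        refine Finset.sum_congr rfl fun f _ => ?_
        calc D g * ((D (f * g))ᴴ * E * D' (f * g))
            = (D g * (D (f * g))ᴴ) * E * D' (f * g) := by
              simp only [Matrix.mul_assoc]
          _ = (μ f g • (D f)ᴴ) * E * D' (f * g) := by rw [key f]
          _ = μ f g • ((D f)ᴴ * E * D' (f * g)) := by rw [Matrix.smul_mul, Matrix.smul_mul]
          _ = ((D f)ᴴ * E) * (μ f g • D' (f * g)) := by rw [Matrix.mul_smul]
          _ = ((D f)ᴴ * E) * (D' f * D' g) := by rw [hDm']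
          _ = ((D f)ᴴ * E * D' f) * D' g := by simp only [Matrix.mul_assoc]
    _ = (∑ f : G, (D f)ᴴ * E * D' f) * D' g := by rw [Matrix.sum_mul]

private lemma schur_scalar {n : Type*} [Fintype n] [DecidableEq n] [Nonempty n]
    {G : Type*} [Group G] [Fintype G]
    (D : G → Matrix n n ℂ)
    (hirr : ∀ S : Submodule ℂ (n → ℂ), (∀ f : G, ∀ v ∈ S, (D f).mulVec v ∈ S) → S = ⊥ ∨ S = ⊤)
    (A : Matrix n n ℂ) (hA : ∀ g : G, D g * A = A * D g) : ∃ c : ℂ, A = c • 1 := by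
  obtain ⟨c, hc⟩ := Module.End.exists_eigenvalue (Matrix.mulVecLin A)
  refine ⟨c, ?_⟩
  have hinv : ∀ f : G, ∀ v ∈ Module.End.eigenspace (Matrix.mulVecLin A) c,
      (D f).mulVec v ∈ Module.End.eigenspace (Matrix.mulVecLin A) c := by
    intro f v hv
    rw [Module.End.mem_eigenspace_iff] at hv ⊢
    rw [Matrix.mulVecLin_apply] at hv ⊢
    rw [Matrix.mulVec_mulVec, ← hA, ← Matrix.mulVec_mulVec, hv, Matrix.mulVec_smul]
  have hS : Module.End.eigenspace (Matrix.mulVecLin A) c = ⊤ := by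
    rcases hirr _ hinv with h | h
    · exact absurd h hc
    · exact h
  have hv : ∀ v : n → ℂ, A.mulVec v = c • v := by
    intro v
    have : v ∈ Module.End.eigenspace (Matrix.mulVecLin A) c := hS ▸ Submodule.mem_top
    rw [Module.End.mem_eigenspace_iff, Matrix.mulVecLin_apply] at this
    exact this
  ext i j
  have h2 := congrFun (hv (Pi.single j 1)) i
  simp only [Matrix.mulVec_single, MulOpposite.op_one, one_smul, Matrix.col, Matrix.transpose_apply, mul_one, Pi.smul_apply, Pi.single_apply, smul_eq_mul] at h2
  simp only [Matrix.smul_apply, Matrix.one_apply, smul_eq_mul, h2]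

private lemma schur_zero {G : Type*} [Group G] [Fintype G]
    {n m : Type*} [Fintype n] [Fintype m] [DecidableEq n] [DecidableEq m]
    (D : G → Matrix n n ℂ) (D' : G → Matrix m m ℂ)
    (hirr : ∀ S : Submodule ℂ (n → ℂ), (∀ f : G, ∀ v ∈ S, (D f).mulVec v ∈ S) → S = ⊥ ∨ S = ⊤)
    (hirr' : ∀ S : Submodule ℂ (m → ℂ), (∀ f : G, ∀ v ∈ S, (D' f).mulVec v ∈ S) → S = ⊥ ∨ S = ⊤)
    (hne : ¬ ∃ (S : Matrix m n ℂ) (T : Matrix n m ℂ),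
      S * T = 1 ∧ T * S = 1 ∧ ∀ f : G, S * D f = D' f * S)
    (A : Matrix n m ℂ) (hA : ∀ g : G, D g * A = A * D' g) : A = 0 := by
  by_contra hA0
  set φ := Matrix.toLin' A with hφ
  have hinv1 : ∀ f : G, ∀ v ∈ LinearMap.range φ, (D f).mulVec v ∈ LinearMap.range φ := by
    rintro f v ⟨w, rfl⟩
    refine ⟨(D' f).mulVec w, ?_⟩
    simp only [hφ, Matrix.toLin'_apply]
    rw [Matrix.mulVec_mulVec, ← hA, ← Matrix.mulVec_mulVec]
  have hinv2 : ∀ f : G, ∀ v ∈ LinearMap.ker φ, (D' f).mulVec v ∈ LinearMap.ker φ := by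
    intro f v hv
    rw [LinearMap.mem_ker] at hv ⊢
    simp only [hφ, Matrix.toLin'_apply] at hv ⊢
    rw [Matrix.mulVec_mulVec, ← hA, ← Matrix.mulVec_mulVec, hv, Matrix.mulVec_zero]
  have hzero : ¬ φ = 0 := by
    intro h0
    exact hA0 (Matrix.toLin'.injective (by rw [← hφ, h0, map_zero]))
  have hrange : LinearMap.range φ = ⊤ := by
    rcases hirr _ hinv1 with h | h
    · exact absurd (LinearMap.range_eq_bot.mp h) hzero
    · exact h
  have hker : LinearMap.ker φ = ⊥ := by
    rcases hirr' _ hinv2 with h | h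
    · exact h
    · exact absurd (LinearMap.ker_eq_top.mp h) hzero
  have hbij : Function.Bijective φ :=
    ⟨LinearMap.ker_eq_bot.mp hker, LinearMap.range_eq_top.mp hrange⟩
  set e := LinearEquiv.ofBijective φ hbij with he
  set S := LinearMap.toMatrix' (e.symm : (n → ℂ) →ₗ[ℂ] (m → ℂ)) with hS
  have hSA : S * A = 1 := by
    apply Matrix.toLin'.injective
    rw [Matrix.toLin'_mul, Matrix.toLin'_one, hS, Matrix.toLin'_toMatrix']
    refine LinearMap.ext fun v => ?_
    have h1 : Matrix.toLin' A v = e v := rfl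
    simp [h1]
  have hAS : A * S = 1 := by
    apply Matrix.toLin'.injective
    rw [Matrix.toLin'_mul, Matrix.toLin'_one, hS, Matrix.toLin'_toMatrix']
    refine LinearMap.ext fun v => ?_
    have h2 : ∀ w, Matrix.toLin' A w = e w := fun _ => rfl
    simp [h2]
  refine hne ⟨S, A, hSA, hAS, fun f => ?_⟩
  calc S * D f
      = S * D f * (A * S) := by rw [hAS, Matrix.mul_one]
    _ = S * (D f * A) * S := by simp only [Matrix.mul_assoc]
    _ = S * (A * D' f) * S := by rw [hA]
    _ = (S * A) * (D' f * S) := by simp only [Matrix.mul_assoc]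
    _ = D' f * S := by rw [hSA, Matrix.one_mul]

private lemma entry_helper {n m : Type*} [Fintype n] [Fintype m] [DecidableEq n] [DecidableEq m]
    (X : Matrix n n ℂ) (Y : Matrix m m ℂ) (a : n) (a' : m) (b : n) (b' : m) :
    (Xᴴ * Matrix.single a a' (1:ℂ) * Y) b b' = star (X a b) * Y a' b' := by
  rw [Matrix.mul_apply]
  simp only [Matrix.mul_apply, Matrix.conjTranspose_apply, Matrix.single,
    Matrix.of_apply, mul_ite, mul_one, mul_zero, ite_mul, zero_mul]
  simp [ite_and, Finset.sum_ite_eq, Finset.sum_ite_eq']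

private lemma muStar' {x : ℂ} (h : ‖x‖ = 1) : x * star x = 1 := by
  rw [Complex.star_def, Complex.mul_conj, ← Complex.sq_norm, h]; norm_num


private lemma orth_diff {G : Type*} [Group G] [Fintype G]
    {n m : Type*} [Fintype n] [Fintype m] [DecidableEq n] [DecidableEq m]
    (μ : G → G → ℂ)
    (hμabs : ∀ f g : G, ‖μ f g‖ = 1)
    (D : G → Matrix n n ℂ) (D' : G → Matrix m m ℂ)
    (hDu : ∀ f, D f ∈ Matrix.unitaryGroup n ℂ)
    (hDm : ∀ f g, D f * D g = μ f g • D (f * g))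
    (hDm' : ∀ f g, D' f * D' g = μ f g • D' (f * g))
    (hirr : ∀ S : Submodule ℂ (n → ℂ), (∀ f : G, ∀ v ∈ S, (D f).mulVec v ∈ S) → S = ⊥ ∨ S = ⊤)
    (hirr' : ∀ S : Submodule ℂ (m → ℂ), (∀ f : G, ∀ v ∈ S, (D' f).mulVec v ∈ S) → S = ⊥ ∨ S = ⊤)
    (hne : ¬ ∃ (S : Matrix m n ℂ) (T : Matrix n m ℂ),
      S * T = 1 ∧ T * S = 1 ∧ ∀ f : G, S * D f = D' f * S)
    (a b : n) (a' b' : m) :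
    ∑ f : G, star (D f a b) * D' f a' b' = 0 := by
  have hint : ∀ g : G, D g * (∑ f : G, (D f)ᴴ * Matrix.single a a' (1:ℂ) * D' f)
      = (∑ f : G, (D f)ᴴ * Matrix.single a a' (1:ℂ) * D' f) * D' g :=
    fun g => avg_intertwine μ hμabs D D' hDu hDm hDm' _ g
  have hz := schur_zero D D' hirr hirr' hne _ hint
  have := congrFun (congrFun hz b) b'
  rw [Matrix.sum_apply] at this
  simp only [entry_helper] at this
  simpa using this

private lemma orth_same {G : Type*} [Group G] [Fintype G]
    {n : Type*} [Fintype n] [DecidableEq n] [Nonempty n]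
    (μ : G → G → ℂ)
    (hμabs : ∀ f g : G, ‖μ f g‖ = 1)
    (D : G → Matrix n n ℂ)
    (hDu : ∀ f, D f ∈ Matrix.unitaryGroup n ℂ)
    (hDm : ∀ f g, D f * D g = μ f g • D (f * g))
    (hirr : ∀ S : Submodule ℂ (n → ℂ), (∀ f : G, ∀ v ∈ S, (D f).mulVec v ∈ S) → S = ⊥ ∨ S = ⊤)
    (a b a' b' : n) :
    ∑ f : G, star (D f a b) * D f a' b'
      = ((Fintype.card G : ℂ) / (Fintype.card n : ℂ))
        * (if a = a' then 1 else 0) * (if b = b' then 1 else 0) := by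
  set E := Matrix.single a a' (1:ℂ) with hE
  set A := ∑ f : G, (D f)ᴴ * E * D f with hA
  obtain ⟨c, hc⟩ := schur_scalar D hirr A
    (fun g => avg_intertwine μ hμabs D D hDu hDm hDm E g)
  have htr : A.trace = (Fintype.card G : ℂ) * (if a = a' then 1 else 0) := by
    rw [hA, Matrix.trace_sum]
    have h1 : ∀ f : G, ((D f)ᴴ * E * D f).trace = E.trace := by
      intro f
      rw [Matrix.trace_mul_cycle]
      have hu : D f * (D f)ᴴ = 1 := by
        have := (Matrix.mem_unitaryGroup_iff).mp (hDu f)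
        rwa [Matrix.star_eq_conjTranspose] at this
      rw [hu, Matrix.one_mul]
    have h2 : E.trace = (if a = a' then 1 else 0) := by
      by_cases h : a = a'
      · subst h; simp [hE, Matrix.trace_single_eq_same]
      · simp [hE, Matrix.trace_single_eq_of_ne a a' (1:ℂ) h, h]
    simp [h1, h2, Finset.sum_const, Finset.card_univ]
  have htr2 : A.trace = c * (Fintype.card n : ℂ) := by
    rw [hc, Matrix.trace_smul, Matrix.trace_one]
    simp [mul_comm]
  have hn : (Fintype.card n : ℂ) ≠ 0 := by
    simp [Fintype.card_ne_zero]
  have hcval : c = (Fintype.card G : ℂ) / (Fintype.card n : ℂ) * (if a = a' then 1 else 0) := by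
    field_simp
    rw [← htr2, htr]
  have := congrFun (congrFun hc b) b'
  rw [hA, Matrix.sum_apply] at this
  simp only [hE, entry_helper] at this
  rw [this, hcval]
  simp [Matrix.one_apply]

private lemma sum_swap_mulL {κ₁ κ₂ : Type*} [Fintype κ₁] [Fintype κ₂]
    (a : κ₁ → κ₂ → ℂ) (v : κ₂ → ℂ) :
    ∑ f : κ₂, (∑ x : κ₁, a x f) * v f = ∑ x : κ₁, ∑ f : κ₂, a x f * v f := by
  simp_rw [Finset.sum_mul]
  exact Finset.sum_comm

private lemma sum_swap_mulR {κ₁ κ₂ : Type*} [Fintype κ₁] [Fintype κ₂]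
    (a : κ₁ → κ₂ → ℂ) (v : κ₂ → ℂ) :
    ∑ f : κ₂, v f * (∑ y : κ₁, a y f) = ∑ y : κ₁, ∑ f : κ₂, v f * a y f := by
  simp_rw [Finset.mul_sum]
  exact Finset.sum_comm

theorem stmt_13 {G : Type*} [Group G] [Fintype G] [DecidableEq G]
    (μ : G → G → ℂ)
    (hμabs : ∀ f g : G, ‖μ f g‖ = 1)
    (hμel : ∀ f : G, μ 1 f = 1) (hμer : ∀ f : G, μ f 1 = 1)
    (hμc : ∀ f g h : G, μ h f * μ (h * f) g = μ h (f * g) * μ f g)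
    {ι : Type*} [Fintype ι] [DecidableEq ι]
    (d : ι → ℕ) (hd : ∀ lam : ι, 1 ≤ d lam)
    (D : (lam : ι) → G → Matrix (Fin (d lam)) (Fin (d lam)) ℂ)
    (hDu : ∀ (lam : ι) (f : G), D lam f ∈ Matrix.unitaryGroup (Fin (d lam)) ℂ)
    (hDe : ∀ lam : ι, D lam 1 = 1)
    (hDm : ∀ (lam : ι) (f g : G), D lam f * D lam g = μ f g • D lam (f * g))
    (hirr : ∀ (lam : ι) (S : Submodule ℂ (Fin (d lam) → ℂ)),
      (∀ (f : G), ∀ v ∈ S, (D lam f).mulVec v ∈ S) → S = ⊥ ∨ S = ⊤)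
    (hineq : ∀ lam lam' : ι, lam ≠ lam' →
      ¬ ∃ (S : Matrix (Fin (d lam')) (Fin (d lam)) ℂ)
          (T : Matrix (Fin (d lam)) (Fin (d lam')) ℂ),
        S * T = 1 ∧ T * S = 1 ∧ ∀ f : G, S * D lam f = D lam' f * S)
    (hcomplete : ∑ lam : ι, (d lam) ^ 2 = Fintype.card G)
    {B : Type*} [Fintype B] [DecidableEq B] [Nonempty B]
    (Q : (lam : ι) → Matrix (Fin (d lam) × B) (Fin (d lam) × B) ℂ)
    (hQ : ∀ lam : ι, Q lam ∈ Matrix.unitaryGroup (Fin (d lam) × B) ℂ)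
    (W : G → Matrix B B ℂ)
    (hW : ∀ (f : G) (p q : B),
      W f p q = ∑ lam : ι, ((d lam : ℂ) / (Fintype.card G : ℂ))
        * ∑ j : Fin (d lam), ∑ k : Fin (d lam),
            star (D lam f j k) * Q lam (j, p) (k, q)) :
    ∀ g : G, ∑ f : G, star (μ f g) • ((W f)ᴴ * W (f * g))
      = if g = 1 then (1 : Matrix B B ℂ) else 0 := by
  intro g
  have hNe : ∀ lam : ι, Nonempty (Fin (d lam)) := fun lam => ⟨⟨0, hd lam⟩⟩
  have hdn : ∀ lam : ι, ((d lam : ℂ)) ≠ 0 := by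
    intro lam
    exact_mod_cast Nat.one_le_iff_ne_zero.mp (hd lam)
  -- orthogonality, same lam
  have orthS : ∀ (lam : ι) (a b a' b' : Fin (d lam)),
      ∑ f : G, star (D lam f a b) * D lam f a' b'
        = ((Fintype.card G : ℂ) / (d lam : ℂ))
          * (if a = a' then 1 else 0) * (if b = b' then 1 else 0) := by
    intro lam a b a' b'
    haveI := hNe lam
    have := orth_same μ hμabs (D lam) (hDu lam) (hDm lam) (hirr lam) a b a' b'
    rwa [Fintype.card_fin] at this
  -- orthogonality, different lam
  have orthD : ∀ (lam lam' : ι), lam ≠ lam' → ∀ (a b : Fin (d lam)) (a' b' : Fin (d lam')),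
      ∑ f : G, star (D lam f a b) * D lam' f a' b' = 0 := by
    intro lam lam' hne a b a' b'
    exact orth_diff μ hμabs (D lam) (D lam') (hDu lam) (hDm lam) (hDm lam')
      (hirr lam) (hirr lam') (hineq lam lam' hne) a b a' b'
  have hN : (Fintype.card G : ℂ) ≠ 0 := by
    exact_mod_cast Fintype.card_ne_zero
  -- column orthogonality / completeness
  have key2 : ∀ h : G, ∑ lam : ι, ((d lam : ℂ) / (Fintype.card G : ℂ)) * star ((D lam h).trace)
      = if h = 1 then 1 else 0 := by
    have hcard : Fintype.card ((l : ι) × (Fin (d l) × Fin (d l))) = Fintype.card G := by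
      rw [← hcomplete, Fintype.card_sigma]
      congr 1
      funext l
      rw [Fintype.card_prod, Fintype.card_fin, sq]
    set σ := (l : ι) × (Fin (d l) × Fin (d l)) with hσ
    set e : σ ≃ G := Fintype.equivOfCardEq hcard with he
    set V : Matrix σ G ℂ := Matrix.of (fun x f => D x.1 f x.2.1 x.2.2) with hV
    set Vt : Matrix G σ ℂ := Matrix.of
      (fun f x => ((d x.1 : ℂ) / (Fintype.card G : ℂ)) * star (D x.1 f x.2.1 x.2.2)) with hVt
    have hVVt : V * Vt = 1 := by
      ext x y
      rw [Matrix.mul_apply]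
      rcases x with ⟨l, i, j⟩
      rcases y with ⟨l', i', j'⟩
      by_cases hl : l = l'
      · subst hl
        have hstep : ∀ f : G, V ⟨l, (i, j)⟩ f * Vt f ⟨l, (i', j')⟩
            = ((d l : ℂ) / (Fintype.card G : ℂ)) * (star (D l f i' j') * D l f i j) := by
          intro f
          simp only [hV, hVt, Matrix.of_apply]
          ring
        rw [Finset.sum_congr rfl (fun f _ => hstep f), ← Finset.mul_sum, orthS l i' j' i j]
        rw [Matrix.one_apply]
        by_cases hi : i = i' <;> by_cases hj : j = j' <;>
          simp [hi, hj, Sigma.mk.inj_iff, Prod.ext_iff, eq_comm, div_self (hdn l),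
            div_mul_div_comm, mul_comm, hN] <;>
          first
          | rfl
          | (rw [div_self (mul_ne_zero (hdn l) hN)])
          | exact Nat.one_le_iff_ne_zero.mp (hd l)
      · have hstep : ∀ f : G, V ⟨l, (i, j)⟩ f * Vt f ⟨l', (i', j')⟩
            = ((d l' : ℂ) / (Fintype.card G : ℂ)) * (star (D l' f i' j') * D l f i j) := by
          intro f
          simp only [hV, hVt, Matrix.of_apply]
          ring
        rw [Finset.sum_congr rfl (fun f _ => hstep f), ← Finset.mul_sum]
        have hz : ∀ f : G, star (D l' f i' j') * D l f i j = star (D l' f i' j') * D l f i j := fun _ => rfl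
        rw [show (∑ f : G, star (D l' f i' j') * D l f i j) = 0 from
          orthD l' l (fun hh => hl hh.symm) i' j' i j]
        rw [Matrix.one_apply]
        simp [Sigma.mk.inj_iff, hl]
    have hsq : V.submatrix id ⇑e * Vt.submatrix ⇑e id = 1 := by
      rw [Matrix.submatrix_mul_equiv, hVVt, Matrix.submatrix_id_id]
    have hVtV := mul_eq_one_comm.mp hsq
    intro h
    have hentry := congrFun (congrFun hVtV (e.symm h)) (e.symm 1)
    rw [Matrix.mul_apply] at hentry
    simp only [Matrix.submatrix_apply, id_eq, Equiv.apply_symm_apply] at hentry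
    rw [Matrix.one_apply] at hentry
    simp only [EmbeddingLike.apply_eq_iff_eq] at hentry
    -- hentry : Σ_{x : σ} Vt h x * V x 1 = if h = 1 then 1 else 0
    rw [← hentry, ← Finset.univ_sigma_univ, Finset.sum_sigma]
    refine Finset.sum_congr rfl fun l _ => ?_
    rw [Fintype.sum_prod_type]
    simp only [hV, hVt, Matrix.of_apply, hDe l, Matrix.one_apply, mul_ite, mul_one, mul_zero,
      Finset.sum_ite_eq, Finset.mem_univ, if_true]
    rw [Matrix.trace]
    simp [Matrix.diag, star_sum, Finset.mul_sum]
    -- ==== final computation ====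
  ext p q
  have hQorth : ∀ (l : ι) (k' k : Fin (d l)) (p' q' : B),
      (∑ j' : Fin (d l), ∑ r : B, star (Q l (j', r) (k', p')) * Q l (j', r) (k, q'))
        = if k' = k ∧ p' = q' then 1 else 0 := by
    intro l k' k p' q'
    have hu : star (Q l) * Q l = 1 := ((Unitary.mem_iff).mp (hQ l)).1
    have hent := congrFun (congrFun hu ((k', p'))) ((k, q'))
    rw [Matrix.mul_apply] at hent
    rw [Fintype.sum_prod_type] at hent
    simp only [Matrix.star_apply, Matrix.one_apply] at hent
    rw [hent]
    simp [Prod.ext_iff]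
  have hμD : ∀ (l : ι) (f : G) (j k : Fin (d l)),
      star (μ f g) * star (D l (f * g) j k)
        = ∑ m : Fin (d l), star (D l f j m) * star (D l g m k) := by
    intro l f j k
    have h := congrFun (congrFun (hDm l f g) j) k
    rw [Matrix.mul_apply, Matrix.smul_apply, smul_eq_mul] at h
    calc star (μ f g) * star (D l (f * g) j k)
        = star (μ f g * D l (f * g) j k) := (star_mul' _ _).symm
      _ = star (∑ m : Fin (d l), D l f j m * D l g m k) := by rw [h]
      _ = ∑ m : Fin (d l), star (D l f j m) * star (D l g m k) := by
          rw [star_sum]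
          exact Finset.sum_congr rfl fun m _ => star_mul' _ _
  have hWstar : ∀ (f : G) (r : B), star (W f r p)
      = ∑ x : (l : ι) × (Fin (d l) × Fin (d l)), ((d x.1 : ℂ) / (Fintype.card G : ℂ)) * (D x.1 f x.2.1 x.2.2 * star (Q x.1 (x.2.1, r) (x.2.2, p))) := by
    intro f r
    rw [hW f r p, star_sum, ← Finset.univ_sigma_univ, Finset.sum_sigma]
    refine Finset.sum_congr rfl fun l' _ => ?_
    dsimp only
    rw [Fintype.sum_prod_type, star_mul', star_div₀, star_natCast, star_natCast,
      star_sum, Finset.mul_sum]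
    refine Finset.sum_congr rfl fun j _ => ?_
    rw [star_sum, Finset.mul_sum]
    refine Finset.sum_congr rfl fun k _ => ?_
    rw [star_mul', star_star]
    try ring
  have hWmu : ∀ (f : G) (r : B), star (μ f g) * W (f * g) r q
      = ∑ y : (l : ι) × (Fin (d l) × Fin (d l) × Fin (d l)), ((d y.1 : ℂ) / (Fintype.card G : ℂ)) * (star (D y.1 f y.2.1 y.2.2.2) * star (D y.1 g y.2.2.2 y.2.2.1) * Q y.1 (y.2.1, r) (y.2.2.1, q)) := by
    intro f r
    rw [hW (f * g) r q, Finset.mul_sum, ← Finset.univ_sigma_univ, Finset.sum_sigma]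
    refine Finset.sum_congr rfl fun l _ => ?_
    dsimp only
    rw [Fintype.sum_prod_type]
    calc star (μ f g) * ((d l : ℂ) / (Fintype.card G : ℂ)
            * ∑ j : Fin (d l), ∑ k : Fin (d l), star (D l (f * g) j k) * Q l (j, r) (k, q))
        = ∑ j : Fin (d l), ∑ k : Fin (d l),
            ((d l : ℂ) / (Fintype.card G : ℂ)) * ((star (μ f g) * star (D l (f * g) j k)) * Q l (j, r) (k, q)) := by
          rw [Finset.mul_sum, Finset.mul_sum]
          refine Finset.sum_congr rfl fun j _ => ?_
          rw [Finset.mul_sum, Finset.mul_sum]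
          refine Finset.sum_congr rfl fun k _ => ?_
          ring
      _ = ∑ j : Fin (d l), ∑ w : Fin (d l) × Fin (d l),
            ((d l : ℂ) / (Fintype.card G : ℂ)) * (star (D l f j w.2) * star (D l g w.2 w.1) * Q l (j, r) (w.1, q)) := by
          refine Finset.sum_congr rfl fun j _ => ?_
          rw [Fintype.sum_prod_type]
          refine Finset.sum_congr rfl fun k _ => ?_
          rw [hμD l f j k, Finset.sum_mul, Finset.mul_sum]
  have step1 : (∑ f : G, star (μ f g) • ((W f)ᴴ * W (f * g))) p q
      = ∑ r : B, ∑ f : G, star (W f r p) * (star (μ f g) * W (f * g) r q) := by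
    rw [Matrix.sum_apply]
    have hf : ∀ f : G, (star (μ f g) • ((W f)ᴴ * W (f * g))) p q
        = ∑ r : B, star (W f r p) * (star (μ f g) * W (f * g) r q) := by
      intro f
      rw [Matrix.smul_apply, Matrix.mul_apply, smul_eq_mul, Finset.mul_sum]
      refine Finset.sum_congr rfl fun r _ => ?_
      rw [Matrix.conjTranspose_apply]
      ring
    rw [Finset.sum_congr rfl fun f _ => hf f, Finset.sum_comm]
  have step2 : ∀ r : B, ∑ f : G, star (W f r p) * (star (μ f g) * W (f * g) r q)
      = ∑ x : (l : ι) × (Fin (d l) × Fin (d l)), ∑ y : (l : ι) × (Fin (d l) × Fin (d l) × Fin (d l)), ∑ f : G,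
          (((d x.1 : ℂ) / (Fintype.card G : ℂ)) * (D x.1 f x.2.1 x.2.2 * star (Q x.1 (x.2.1, r) (x.2.2, p)))) * (((d y.1 : ℂ) / (Fintype.card G : ℂ)) * (star (D y.1 f y.2.1 y.2.2.2) * star (D y.1 g y.2.2.2 y.2.2.1) * Q y.1 (y.2.1, r) (y.2.2.1, q))) := by
    intro r
    calc ∑ f : G, star (W f r p) * (star (μ f g) * W (f * g) r q)
        = ∑ f : G, (∑ x : (l : ι) × (Fin (d l) × Fin (d l)), ((d x.1 : ℂ) / (Fintype.card G : ℂ)) * (D x.1 f x.2.1 x.2.2 * star (Q x.1 (x.2.1, r) (x.2.2, p))))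
            * (star (μ f g) * W (f * g) r q) := by
          exact Finset.sum_congr rfl fun f _ => by rw [hWstar f r]
      _ = ∑ x : (l : ι) × (Fin (d l) × Fin (d l)), ∑ f : G, (((d x.1 : ℂ) / (Fintype.card G : ℂ)) * (D x.1 f x.2.1 x.2.2 * star (Q x.1 (x.2.1, r) (x.2.2, p))))
            * (star (μ f g) * W (f * g) r q) :=
          sum_swap_mulL _ _
      _ = ∑ x : (l : ι) × (Fin (d l) × Fin (d l)), ∑ f : G, (((d x.1 : ℂ) / (Fintype.card G : ℂ)) * (D x.1 f x.2.1 x.2.2 * star (Q x.1 (x.2.1, r) (x.2.2, p))))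
            * (∑ y : (l : ι) × (Fin (d l) × Fin (d l) × Fin (d l)), ((d y.1 : ℂ) / (Fintype.card G : ℂ)) * (star (D y.1 f y.2.1 y.2.2.2) * star (D y.1 g y.2.2.2 y.2.2.1) * Q y.1 (y.2.1, r) (y.2.2.1, q))) := by
          exact Finset.sum_congr rfl fun x _ => Finset.sum_congr rfl fun f _ => by rw [hWmu f r]
      _ = ∑ x : (l : ι) × (Fin (d l) × Fin (d l)), ∑ y : (l : ι) × (Fin (d l) × Fin (d l) × Fin (d l)), ∑ f : G,
          (((d x.1 : ℂ) / (Fintype.card G : ℂ)) * (D x.1 f x.2.1 x.2.2 * star (Q x.1 (x.2.1, r) (x.2.2, p)))) * (((d y.1 : ℂ) / (Fintype.card G : ℂ)) * (star (D y.1 f y.2.1 y.2.2.2) * star (D y.1 g y.2.2.2 y.2.2.1) * Q y.1 (y.2.1, r) (y.2.2.1, q))) := by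
          exact Finset.sum_congr rfl fun x _ => sum_swap_mulR _ _
  have step3 : ∀ (r : B) (x : (l : ι) × (Fin (d l) × Fin (d l))),
      (∑ y : (l : ι) × (Fin (d l) × Fin (d l) × Fin (d l)), ∑ f : G, (((d x.1 : ℂ) / (Fintype.card G : ℂ)) * (D x.1 f x.2.1 x.2.2 * star (Q x.1 (x.2.1, r) (x.2.2, p)))) * (((d y.1 : ℂ) / (Fintype.card G : ℂ)) * (star (D y.1 f y.2.1 y.2.2.2) * star (D y.1 g y.2.2.2 y.2.2.1) * Q y.1 (y.2.1, r) (y.2.2.1, q))))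
        = ∑ k : Fin (d x.1), ((d x.1 : ℂ) / (Fintype.card G : ℂ)) * (star (Q x.1 (x.2.1, r) (x.2.2, p)) * star (D x.1 g x.2.2 k) * Q x.1 (x.2.1, r) (k, q)) := by
    intro r x
    rw [← Finset.univ_sigma_univ, Finset.sum_sigma]
    rw [Finset.sum_eq_single x.1]
    · dsimp only
      have hterm : ∀ (j : Fin (d x.1)) (w : Fin (d x.1) × Fin (d x.1)),
          (∑ f : G, (((d x.1 : ℂ) / (Fintype.card G : ℂ)) * (D x.1 f x.2.1 x.2.2 * star (Q x.1 (x.2.1, r) (x.2.2, p)))) * (((d x.1 : ℂ) / (Fintype.card G : ℂ)) * (star (D x.1 f j w.2) * star (D x.1 g w.2 w.1) * Q x.1 (j, r) (w.1, q))))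
            = (if j = x.2.1 then 1 else 0) * ((if w.2 = x.2.2 then 1 else 0) *
              (((d x.1 : ℂ) / (Fintype.card G : ℂ)) * (star (Q x.1 (x.2.1, r) (x.2.2, p))
                * star (D x.1 g w.2 w.1) * Q x.1 (j, r) (w.1, q)))) := by
        intro j w
        have hfac : ∀ f : G, (((d x.1 : ℂ) / (Fintype.card G : ℂ)) * (D x.1 f x.2.1 x.2.2 * star (Q x.1 (x.2.1, r) (x.2.2, p)))) * (((d x.1 : ℂ) / (Fintype.card G : ℂ)) * (star (D x.1 f j w.2) * star (D x.1 g w.2 w.1) * Q x.1 (j, r) (w.1, q)))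
            = (((d x.1 : ℂ) / (Fintype.card G : ℂ)) * ((d x.1 : ℂ) / (Fintype.card G : ℂ))
              * (star (Q x.1 (x.2.1, r) (x.2.2, p)) * star (D x.1 g w.2 w.1)
                * Q x.1 (j, r) (w.1, q)))
              * (star (D x.1 f j w.2) * D x.1 f x.2.1 x.2.2) := fun f => by ring
        rw [Finset.sum_congr rfl fun f _ => hfac f, ← Finset.mul_sum,
          orthS x.1 j w.2 x.2.1 x.2.2]
        by_cases h1 : j = x.2.1 <;> by_cases h2 : w.2 = x.2.2 <;>
          simp only [h1, h2, if_true, if_false, mul_one, mul_zero, one_mul, zero_mul] <;>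
          (try (field_simp [hdn x.1]; ring)) <;> field_simp
      calc (∑ z : Fin (d x.1) × (Fin (d x.1) × Fin (d x.1)), ∑ f : G,
              (((d x.1 : ℂ) / (Fintype.card G : ℂ)) * (D x.1 f x.2.1 x.2.2 * star (Q x.1 (x.2.1, r) (x.2.2, p)))) * (((d x.1 : ℂ) / (Fintype.card G : ℂ)) * (star (D x.1 f z.1 z.2.2) * star (D x.1 g z.2.2 z.2.1) * Q x.1 (z.1, r) (z.2.1, q))))
          = ∑ j : Fin (d x.1), ∑ w : Fin (d x.1) × Fin (d x.1), ∑ f : G,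
              (((d x.1 : ℂ) / (Fintype.card G : ℂ)) * (D x.1 f x.2.1 x.2.2 * star (Q x.1 (x.2.1, r) (x.2.2, p)))) * (((d x.1 : ℂ) / (Fintype.card G : ℂ)) * (star (D x.1 f j w.2) * star (D x.1 g w.2 w.1) * Q x.1 (j, r) (w.1, q))) := by
            rw [Fintype.sum_prod_type]
        _ = ∑ w : Fin (d x.1) × Fin (d x.1), ∑ j : Fin (d x.1),
              (if j = x.2.1 then 1 else 0) * ((if w.2 = x.2.2 then 1 else 0) *
              (((d x.1 : ℂ) / (Fintype.card G : ℂ)) * (star (Q x.1 (x.2.1, r) (x.2.2, p))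
                * star (D x.1 g w.2 w.1) * Q x.1 (j, r) (w.1, q)))) := by
            rw [Finset.sum_comm]
            exact Finset.sum_congr rfl fun w _ => Finset.sum_congr rfl fun j _ => hterm j w
        _ = ∑ k : Fin (d x.1), ((d x.1 : ℂ) / (Fintype.card G : ℂ)) * (star (Q x.1 (x.2.1, r) (x.2.2, p)) * star (D x.1 g x.2.2 k) * Q x.1 (x.2.1, r) (k, q)) := by
            rw [Fintype.sum_prod_type]
            simp only [boole_mul, Finset.sum_ite_eq', Finset.mem_univ, if_true]
    · intro l _ hl
      dsimp only
      refine Finset.sum_eq_zero fun z _ => ?_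
      have hfac : ∀ f : G, (((d x.1 : ℂ) / (Fintype.card G : ℂ)) * (D x.1 f x.2.1 x.2.2 * star (Q x.1 (x.2.1, r) (x.2.2, p)))) * (((d l : ℂ) / (Fintype.card G : ℂ)) * (star (D l f z.1 z.2.2) * star (D l g z.2.2 z.2.1) * Q l (z.1, r) (z.2.1, q)))
          = (((d x.1 : ℂ) / (Fintype.card G : ℂ)) * ((d l : ℂ) / (Fintype.card G : ℂ))
            * (star (Q x.1 (x.2.1, r) (x.2.2, p)) * star (D l g z.2.2 z.2.1)
              * Q l (z.1, r) (z.2.1, q)))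
            * (star (D l f z.1 z.2.2) * D x.1 f x.2.1 x.2.2) := fun f => by ring
      rw [Finset.sum_congr rfl fun f _ => hfac f, ← Finset.mul_sum,
        orthD l x.1 hl z.1 z.2.2 x.2.1 x.2.2, mul_zero]
    · intro h
      exact absurd (Finset.mem_univ x.1) h
  rw [step1, Finset.sum_congr rfl fun r _ => (step2 r).trans
    (Finset.sum_congr rfl fun x _ => step3 r x)]
  -- now: Σ_r Σ_x Σ_k T = RHS entry
  rw [Finset.sum_comm]
  rw [Finset.sum_congr rfl fun (x : (l : ι) × (Fin (d l) × Fin (d l))) _ => (Finset.sum_comm : (∑ r : B, ∑ k : Fin (d x.1), ((d x.1 : ℂ) / (Fintype.card G : ℂ)) * (star (Q x.1 (x.2.1, r) (x.2.2, p)) * star (D x.1 g x.2.2 k) * Q x.1 (x.2.1, r) (k, q))) = _)]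
  rw [← Finset.univ_sigma_univ, Finset.sum_sigma]
  calc ∑ l : ι, ∑ z : Fin (d l) × Fin (d l), ∑ k : Fin (d l), ∑ r : B,
        ((d l : ℂ) / (Fintype.card G : ℂ)) * (star (Q l (z.1, r) (z.2, p)) * star (D l g z.2 k) * Q l (z.1, r) (k, q))
      = ∑ l : ι, ((d l : ℂ) / (Fintype.card G : ℂ)) * star ((D l g).trace) * (if p = q then 1 else 0) := by
        refine Finset.sum_congr rfl fun l _ => ?_
        rw [Fintype.sum_prod_type, Finset.sum_comm]
        calc ∑ k' : Fin (d l), ∑ j' : Fin (d l), ∑ k : Fin (d l), ∑ r : B,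
              ((d l : ℂ) / (Fintype.card G : ℂ)) * (star (Q l (j', r) (k', p)) * star (D l g k' k) * Q l (j', r) (k, q))
            = ∑ k' : Fin (d l), ∑ k : Fin (d l),
              ((d l : ℂ) / (Fintype.card G : ℂ)) * star (D l g k' k) * (if k' = k ∧ p = q then 1 else 0) := by
              refine Finset.sum_congr rfl fun k' _ => ?_
              rw [Finset.sum_comm]
              refine Finset.sum_congr rfl fun k _ => ?_
              calc ∑ j' : Fin (d l), ∑ r : B,
                    ((d l : ℂ) / (Fintype.card G : ℂ)) * (star (Q l (j', r) (k', p)) * star (D l g k' k) * Q l (j', r) (k, q))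
                  = ((d l : ℂ) / (Fintype.card G : ℂ)) * star (D l g k' k)
                      * ∑ j' : Fin (d l), ∑ r : B, star (Q l (j', r) (k', p)) * Q l (j', r) (k, q) := by
                    rw [Finset.mul_sum]
                    refine Finset.sum_congr rfl fun j' _ => ?_
                    rw [Finset.mul_sum]
                    refine Finset.sum_congr rfl fun r _ => ?_
                    ring
                _ = ((d l : ℂ) / (Fintype.card G : ℂ)) * star (D l g k' k) * (if k' = k ∧ p = q then 1 else 0) := by
                    rw [hQorth l k' k p q]
          _ = ((d l : ℂ) / (Fintype.card G : ℂ)) * star ((D l g).trace) * (if p = q then 1 else 0) := by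
              simp only [ite_and, mul_ite, mul_one, mul_zero, Finset.sum_ite_eq,
                Finset.mem_univ, if_true]
              rw [Matrix.trace]
              by_cases hpq : p = q <;>
                simp [hpq, star_sum, Finset.mul_sum, Matrix.diag]
    _ = (∑ l : ι, ((d l : ℂ) / (Fintype.card G : ℂ)) * star ((D l g).trace)) * (if p = q then 1 else 0) := by
        rw [Finset.sum_mul]
    _ = (if g = 1 then 1 else 0) * (if p = q then 1 else 0) := by rw [key2 g]
    _ = (if g = 1 then (1 : Matrix B B ℂ) else 0) p q := by
        by_cases hg : g = 1 <;> by_cases hpq : p = q <;>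
          simp [hg, hpq, Matrix.one_apply]
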